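/- The Z[q,q^{-1}]-module of quantum integer-valued polynomials is free with basis the polynomials gbinom(x,k) = x(x-[1]_q)(x-[2]_q)···(x-[k-1]_q)/(q^{k(k-1)/2}[k]_q!) for k ∈ Z_{≥0}. -/

import Mathlib

open Polynomial Finset

noncomputable section

/-- The q-integer `[n]_q = (q^n - 1)/(q - 1)` for `n ∈ ℤ`, in `ℚ(q)`. -/
def qInt (n : ℤ) : RatFunc ℚ := (RatFunc.X ^ n - 1) / (RatFunc.X - 1)

/-- Membership in `ℤ[q, q⁻¹] ⊆ ℚ(q)`. -/
def IsLaurentInt (z : RatFunc ℚ) : Prop :=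
  ∃ (p : Polynomial ℤ) (k : ℕ),
    RatFunc.X ^ k * z = algebraMap (Polynomial ℚ) (RatFunc ℚ) (p.map (Int.castRingHom ℚ))

/-- The basis polynomial `gbinom(x, k) = x(x-[1]_q)⋯(x-[k-1]_q) / (q^{C(k,2)} [k]_q!)`. -/
def gbinomPoly (k : ℕ) : Polynomial (RatFunc ℚ) :=
  Polynomial.C ((RatFunc.X ^ (k.choose 2) * ∏ i ∈ Finset.range k, qInt ((i : ℤ) + 1))⁻¹) *
    ∏ i ∈ Finset.range k, (Polynomial.X - Polynomial.C (qInt (i : ℤ)))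

namespace QIVP

local notation "K" => RatFunc ℚ
local notation "q" => (RatFunc.X : RatFunc ℚ)

lemma X_ne_one : (RatFunc.X : K) ≠ 1 := by
  intro h
  have h2 : algebraMap (Polynomial ℚ) K Polynomial.X = algebraMap _ _ 1 := by
    rw [RatFunc.algebraMap_X, map_one, h]
  have := RatFunc.algebraMap_injective ℚ h2
  simpa using congrArg Polynomial.natDegree this

lemma X_sub_one_ne : (RatFunc.X : K) - 1 ≠ 0 := sub_ne_zero.mpr X_ne_one

lemma qInt_zero : qInt 0 = 0 := by simp [qInt]

/-- key identity -/
lemma qInt_sub (a b : ℤ) : qInt a - qInt b = q ^ b * qInt (a - b) := by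
  unfold qInt
  rw [div_sub_div_same, mul_div_assoc']
  congr 1
  rw [mul_sub, ← zpow_add₀ RatFunc.X_ne_zero]
  have hb : b + (a - b) = a := by ring
  rw [hb]; ring

lemma qInt_natCast (n : ℕ) : qInt n = ∑ i ∈ range n, q ^ i := by
  rw [qInt, zpow_natCast, eq_comm, eq_div_iff X_sub_one_ne]
  exact geom_sum_mul _ n

lemma zpow_X_ne_one {n : ℤ} (hn : n ≠ 0) : (q) ^ n ≠ 1 := by
  have key : ∀ m : ℕ, m ≠ 0 → (q) ^ m ≠ 1 := by
    intro m hm h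
    have h2 : algebraMap (Polynomial ℚ) K (Polynomial.X ^ m) = algebraMap _ _ 1 := by
      rw [map_pow, RatFunc.algebraMap_X, map_one, h]
    have := RatFunc.algebraMap_injective ℚ h2
    have hd := congrArg Polynomial.natDegree this
    simp [Polynomial.natDegree_X_pow] at hd
    exact hm hd
  intro h
  rcases lt_or_gt_of_ne hn with h1 | h1
  · have h3 : (q) ^ (-n) = 1 := by rw [zpow_neg, h, inv_one]
    lift -n to ℕ using (by omega) with m hm
    rw [zpow_natCast] at h3
    exact key m (by omega) h3
  · lift n to ℕ using h1.le with m hm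
    rw [zpow_natCast] at h
    exact key m (by simpa using hn) h

lemma qInt_ne_zero {m : ℤ} (hm : m ≠ 0) : qInt m ≠ 0 := by
  rw [qInt, div_ne_zero_iff]
  exact ⟨sub_ne_zero.mpr (zpow_X_ne_one hm), X_sub_one_ne⟩

/-- the q-factorial -/
def facq (k : ℕ) : K := ∏ i ∈ range k, qInt ((i : ℤ) + 1)

lemma facq_ne_zero (k : ℕ) : facq k ≠ 0 := by
  rw [facq]
  exact Finset.prod_ne_zero_iff.mpr fun i _ => qInt_ne_zero (by omega)

lemma facq_succ (k : ℕ) : facq (k + 1) = facq k * qInt (k + 1) := by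
  rw [facq, Finset.prod_range_succ]; rfl

/-- the falling product -/
def fall (n : ℤ) (k : ℕ) : K := ∏ i ∈ range k, qInt (n - i)

lemma fall_self (k : ℕ) : fall k k = facq k := by
  induction k with
  | zero => simp [fall, facq]
  | succ k ih =>
    rw [fall, Finset.prod_range_succ', facq_succ, ← ih, fall]
    congr 1
    refine Finset.prod_congr rfl fun i _ => ?_
    congr 1; omega

lemma fall_eq_zero {n : ℤ} {k : ℕ} (h0 : 0 ≤ n) (hk : n < k) : fall n k = 0 := by
  lift n to ℕ using h0 with m hm
  refine Finset.prod_eq_zero (i := m) (Finset.mem_range.mpr (by exact_mod_cast hk)) ?_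
  simp [qInt_zero]

lemma fall_succ (n : ℤ) (k : ℕ) : fall n (k + 1) = fall n k * qInt (n - k) := by
  rw [fall, Finset.prod_range_succ]; rfl

lemma fall_succ' (n : ℤ) (k : ℕ) : fall (n + 1) (k + 1) = fall n k * qInt (n + 1) := by
  rw [fall, Finset.prod_range_succ', fall]
  congr 1
  · refine Finset.prod_congr rfl fun i _ => ?_
    congr 1; omega
  · congr 1; omega

/-- Gaussian binomial -/
def gb (n : ℤ) (k : ℕ) : K := fall n k / facq k

lemma gb_self (k : ℕ) : gb k k = 1 := by
  rw [gb, fall_self, div_self (facq_ne_zero k)]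

lemma gb_zero_right (n : ℤ) : gb n 0 = 1 := by simp [gb, fall, facq]

lemma gb_eq_zero {n : ℤ} {k : ℕ} (h0 : 0 ≤ n) (hk : n < k) : gb n k = 0 := by
  rw [gb, fall_eq_zero h0 hk, zero_div]

lemma gb_pascal (N k : ℕ) :
    gb ((N : ℤ) + 1) (k + 1) = q ^ (k + 1) * gb N (k + 1) + gb N k := by
  have key : qInt ((N : ℤ) + 1) = q ^ (k + 1) * qInt ((N : ℤ) - k) + qInt ((k : ℤ) + 1) := by
    have h := qInt_sub ((N : ℤ) + 1) ((k : ℤ) + 1)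
    have e : (N : ℤ) + 1 - ((k : ℤ) + 1) = (N : ℤ) - k := by ring
    have e2 : (q : K) ^ ((k : ℤ) + 1) = q ^ (k + 1) := by
      have e3 : ((k : ℤ) + 1) = ((k + 1 : ℕ) : ℤ) := by push_cast; ring
      rw [e3, zpow_natCast]
    rw [e, e2] at h
    linear_combination h
  have h1 : facq k ≠ 0 := facq_ne_zero k
  have h2 : qInt ((k : ℤ) + 1) ≠ 0 := qInt_ne_zero (by omega)
  rw [gb, gb, gb, fall_succ' N k, fall_succ N k, facq_succ, key]
  field_simp

/-- The subring of Laurent integers. -/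
def LInt : Subring K where
  carrier := {z | IsLaurentInt z}
  zero_mem' := ⟨0, 0, by simp⟩
  one_mem' := ⟨1, 0, by simp⟩
  add_mem' := by
    rintro a b ⟨p1, k1, h1⟩ ⟨p2, k2, h2⟩
    refine ⟨Polynomial.X ^ k2 * p1 + Polynomial.X ^ k1 * p2, k1 + k2, ?_⟩
    have e : (RatFunc.X : K) ^ (k1 + k2) * (a + b) =
        RatFunc.X ^ k2 * (RatFunc.X ^ k1 * a) + RatFunc.X ^ k1 * (RatFunc.X ^ k2 * b) := by
      ring
    rw [e, h1, h2]
    simp [Polynomial.map_add, Polynomial.map_mul, Polynomial.map_pow, map_add, map_mul,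
      map_pow, RatFunc.algebraMap_X]
  mul_mem' := by
    rintro a b ⟨p1, k1, h1⟩ ⟨p2, k2, h2⟩
    refine ⟨p1 * p2, k1 + k2, ?_⟩
    have e : (RatFunc.X : K) ^ (k1 + k2) * (a * b) =
        (RatFunc.X ^ k1 * a) * (RatFunc.X ^ k2 * b) := by ring
    rw [e, h1, h2]
    simp [Polynomial.map_mul, map_mul]
  neg_mem' := by
    rintro a ⟨p, k, h⟩
    exact ⟨-p, k, by rw [mul_neg, h]; simp⟩

lemma mem_LInt {z : K} : z ∈ LInt ↔ IsLaurentInt z := Iff.rfl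

lemma X_mem : (RatFunc.X : K) ∈ LInt :=
  ⟨Polynomial.X, 0, by simp [RatFunc.algebraMap_X]⟩

lemma zpow_mem (n : ℤ) : (q) ^ n ∈ LInt := by
  rcases le_or_gt 0 n with h | h
  · lift n to ℕ using h with m hm
    rw [zpow_natCast]
    exact pow_mem X_mem m
  · refine ⟨1, (-n).toNat, ?_⟩
    have e : ((-n).toNat : ℤ) = -n := Int.toNat_of_nonneg (by omega)
    rw [← zpow_natCast (RatFunc.X : K) (-n).toNat, e, ← zpow_add₀ RatFunc.X_ne_zero]
    simp

lemma qInt_mem (n : ℕ) : qInt n ∈ LInt := by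
  rw [qInt_natCast]
  exact Subring.sum_mem _ fun i _ => pow_mem X_mem i

lemma gb_mem_nat (N : ℕ) : ∀ k : ℕ, gb N k ∈ LInt := by
  induction N with
  | zero =>
    intro k
    cases k with
    | zero => rw [gb_zero_right]; exact one_mem _
    | succ k =>
      rw [show ((0 : ℕ) : ℤ) = 0 from rfl, gb_eq_zero le_rfl (by exact_mod_cast k.succ_pos)]
      exact zero_mem _
  | succ N ih =>
    intro k
    cases k with
    | zero => rw [gb_zero_right]; exact one_mem _
    | succ k =>
      have e : ((N + 1 : ℕ) : ℤ) = (N : ℤ) + 1 := by push_cast; ring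
      rw [e, gb_pascal]
      exact add_mem (mul_mem (pow_mem X_mem _) (ih (k + 1))) (ih k)

lemma prod_zpow' (s : Finset ℕ) (f : ℕ → ℤ) :
    ∏ i ∈ s, (q) ^ f i = (q) ^ (∑ i ∈ s, f i) := by
  classical
  induction s using Finset.induction with
  | empty => simp
  | @insert _ _ h ih => rw [Finset.prod_insert h, Finset.sum_insert h, zpow_add₀ RatFunc.X_ne_zero, ih]

lemma qInt_neg (m : ℤ) : qInt (-m) = -((q) ^ (-m) * qInt m) := by
  have h := qInt_sub 0 m
  rw [qInt_zero, zero_sub, zero_sub] at h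
  calc qInt (-m) = (q) ^ (-m) * ((q) ^ m * qInt (-m)) := by
        rw [← mul_assoc, ← zpow_add₀ RatFunc.X_ne_zero]; simp
    _ = (q) ^ (-m) * (-qInt m) := by rw [← h]
    _ = -((q) ^ (-m) * qInt m) := by ring

lemma fall_neg (m k : ℕ) :
    fall (-((m : ℤ) + 1)) k =
      (-1) ^ k * (q) ^ (∑ i ∈ range k, (-((m : ℤ) + 1) - i)) * fall ((m : ℤ) + k) k := by
  have step1 : fall (-((m : ℤ) + 1)) k =
      ∏ i ∈ range k, (-1 * ((q) ^ (-((m : ℤ) + 1) - i) * qInt (((m : ℤ) + 1) + i))) := by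
    rw [fall]
    refine Finset.prod_congr rfl fun i _ => ?_
    have e : -((m : ℤ) + 1) - i = -(((m : ℤ) + 1) + i) := by ring
    rw [e, qInt_neg]; ring
  rw [step1, Finset.prod_mul_distrib, Finset.prod_mul_distrib, prod_zpow']
  have e2 : ∏ i ∈ range k, qInt (((m : ℤ) + 1) + i) = fall ((m : ℤ) + k) k := by
    rw [fall, ← Finset.prod_range_reflect]
    refine Finset.prod_congr rfl fun j hj => ?_
    rw [Finset.mem_range] at hj
    congr 1
    omega
  rw [e2, Finset.prod_const, Finset.card_range]
  ring

lemma gb_mem (n : ℤ) (k : ℕ) : gb n k ∈ LInt := by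
  rcases le_or_gt 0 n with h | h
  · lift n to ℕ using h with m hm
    exact gb_mem_nat m k
  · have hm : n = -(((-n - 1).toNat : ℤ) + 1) := by
      have := Int.toNat_of_nonneg (show (0:ℤ) ≤ -n - 1 by omega)
      omega
    set m := (-n - 1).toNat with hmdef
    rw [gb, hm, fall_neg m k]
    have e : (-1 : K) ^ k * (q) ^ (∑ i ∈ range k, (-((m : ℤ) + 1) - i)) * fall ((m : ℤ) + k) k / facq k
        = (-1 : K) ^ k * (q) ^ (∑ i ∈ range k, (-((m : ℤ) + 1) - i)) * gb ((m : ℤ) + k) k := by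
      rw [gb]; ring
    rw [e]
    have e4 : ((m : ℤ) + k) = ((m + k : ℕ) : ℤ) := by push_cast; ring
    rw [e4]
    exact mul_mem (mul_mem (pow_mem (neg_mem (one_mem _)) k) (zpow_mem _)) (gb_mem_nat (m + k) k)

/-- leading coefficient of `gbinomPoly` -/
def Lc (k : ℕ) : K := ((q) ^ (k.choose 2) * facq k)⁻¹

lemma qpow_facq_ne_zero (k : ℕ) : (q) ^ (k.choose 2) * facq k ≠ 0 :=
  mul_ne_zero (pow_ne_zero _ RatFunc.X_ne_zero) (facq_ne_zero k)

lemma Lc_ne_zero (k : ℕ) : Lc k ≠ 0 := inv_ne_zero (qpow_facq_ne_zero k)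

lemma gbinom_def (k : ℕ) :
    gbinomPoly k = Polynomial.C (Lc k) * ∏ i ∈ range k, (Polynomial.X - Polynomial.C (qInt i)) :=
  rfl

lemma prod_monic (k : ℕ) :
    (∏ i ∈ range k, (Polynomial.X - Polynomial.C (qInt i))).Monic :=
  monic_prod_of_monic _ _ fun i _ => monic_X_sub_C _

lemma prod_natDegree (k : ℕ) :
    (∏ i ∈ range k, (Polynomial.X - Polynomial.C (qInt i))).natDegree = k := by
  rw [Polynomial.natDegree_prod_of_monic (range k) _ fun i _ => monic_X_sub_C (qInt (i : ℕ))]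
  simp [Polynomial.natDegree_X_sub_C]

lemma gbinom_natDegree (k : ℕ) : (gbinomPoly k).natDegree = k := by
  rw [gbinom_def, Polynomial.natDegree_C_mul (Lc_ne_zero k)]
  exact prod_natDegree k

lemma gbinom_coeff_self (k : ℕ) : (gbinomPoly k).coeff k = Lc k := by
  rw [gbinom_def, Polynomial.coeff_C_mul]
  have h : (∏ i ∈ range k, (Polynomial.X - Polynomial.C (qInt i))).coeff k = 1 := by
    have := (prod_monic k).leadingCoeff
    rwa [Polynomial.leadingCoeff, prod_natDegree] at this
  rw [h, mul_one]

lemma gbinom_coeff_of_gt {k m : ℕ} (h : k < m) : (gbinomPoly k).coeff m = 0 :=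
  Polynomial.coeff_eq_zero_of_natDegree_lt (by rw [gbinom_natDegree]; exact h)

lemma eval_gbinom (n : ℤ) (k : ℕ) : (gbinomPoly k).eval (qInt n) = gb n k := by
  rw [gbinom_def, Polynomial.eval_mul, Polynomial.eval_C, Polynomial.eval_prod]
  have e1 : ∏ i ∈ range k, ((Polynomial.X - Polynomial.C (qInt i)).eval (qInt n)) =
      (q) ^ (k.choose 2) * fall n k := by
    have e2 : ∀ i ∈ range k, (Polynomial.X - Polynomial.C (qInt i)).eval (qInt n) =
        (q) ^ (i : ℤ) * qInt (n - i) := by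
      intro i _
      rw [Polynomial.eval_sub, Polynomial.eval_X, Polynomial.eval_C, qInt_sub]
    rw [Finset.prod_congr rfl e2, Finset.prod_mul_distrib, prod_zpow']
    have hs : ∑ i ∈ range k, (i : ℤ) = (k.choose 2 : ℤ) := by
      have h2 : (∑ i ∈ range k, i) * 2 = k * (k - 1) := Finset.sum_range_id_mul_two k
      have h3 : k.choose 2 = k * (k - 1) / 2 := Nat.choose_two_right k
      have h4 : ∑ i ∈ range k, i = k.choose 2 := by omega
      rw [← h4]
      push_cast
      rfl
    rw [hs, zpow_natCast]
    rfl
  rw [e1, gb, Lc, ← div_eq_inv_mul]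
  exact mul_div_mul_left _ _ (pow_ne_zero _ RatFunc.X_ne_zero)

/-- the expansion sum -/
def Sexp (c : ℕ →₀ K) : Polynomial K := c.sum fun k a => Polynomial.C a * gbinomPoly k

lemma Sexp_add (c1 c2 : ℕ →₀ K) : Sexp (c1 + c2) = Sexp c1 + Sexp c2 :=
  Finsupp.sum_add_index' (by simp) (fun k b1 b2 => by rw [map_add, add_mul])

lemma Sexp_sub (c1 c2 : ℕ →₀ K) : Sexp (c1 - c2) = Sexp c1 - Sexp c2 :=
  Finsupp.sum_sub_index (fun k b1 b2 => by rw [map_sub, sub_mul])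

lemma Sexp_single (n : ℕ) (b : K) : Sexp (Finsupp.single n b) = Polynomial.C b * gbinomPoly n :=
  Finsupp.sum_single_index (by simp)

lemma eval_Sexp (c : ℕ →₀ K) (n : ℤ) :
    (Sexp c).eval (qInt n) = ∑ j ∈ c.support, c j * gb n j := by
  rw [Sexp, Finsupp.sum, Polynomial.eval_finset_sum]
  exact Finset.sum_congr rfl fun j _ => by
    rw [Polynomial.eval_mul, Polynomial.eval_C, eval_gbinom]

lemma Sexp_eq_zero {d : ℕ →₀ K} (h : Sexp d = 0) : d = 0 := by
  by_contra hd
  have hne : d.support.Nonempty := Finsupp.support_nonempty_iff.mpr hd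
  set m := d.support.max' hne with hm
  have hcoeff : (Sexp d).coeff m = d m * Lc m := by
    rw [Sexp, Finsupp.sum, Polynomial.finset_sum_coeff, Finset.sum_eq_single m]
    · rw [Polynomial.coeff_C_mul, gbinom_coeff_self]
    · intro j hj hjm
      have hjlt : j < m := lt_of_le_of_ne (Finset.le_max' _ j hj) hjm
      rw [Polynomial.coeff_C_mul, gbinom_coeff_of_gt hjlt, mul_zero]
    · intro hnot
      exact absurd (Finset.max'_mem _ hne) hnot
  rw [h, Polynomial.coeff_zero] at hcoeff
  have : d m = 0 := by
    rcases mul_eq_zero.mp hcoeff.symm with h1 | h1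
    · exact h1
    · exact absurd h1 (Lc_ne_zero m)
  exact absurd this (Finsupp.mem_support_iff.mp (Finset.max'_mem _ hne))

lemma exists_expansion : ∀ (n : ℕ) (f : Polynomial K), f.degree < n → ∃ c : ℕ →₀ K, f = Sexp c := by
  intro n
  induction n with
  | zero =>
    intro f hf
    have : f = 0 := by
      rw [← Polynomial.degree_eq_bot]
      exact Nat.WithBot.lt_zero_iff.mp (by exact_mod_cast hf)
    exact ⟨0, by simp [this, Sexp, Finsupp.sum_zero_index]⟩
  | succ n ih =>
    intro f hf
    set b := f.coeff n * ((q) ^ (n.choose 2) * facq n) with hb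
    set g := f - Polynomial.C b * gbinomPoly n with hg
    have hgd : g.degree < n := by
      rw [Polynomial.degree_lt_iff_coeff_zero]
      intro m hm
      rcases eq_or_lt_of_le hm with h1 | h1
      · rw [hg, Polynomial.coeff_sub, Polynomial.coeff_C_mul, ← h1, gbinom_coeff_self, hb, Lc,
          mul_assoc, mul_inv_cancel₀ (qpow_facq_ne_zero n), mul_one, sub_self]
      · rw [hg, Polynomial.coeff_sub, Polynomial.coeff_C_mul, gbinom_coeff_of_gt h1, mul_zero,
          sub_zero]
        refine Polynomial.coeff_eq_zero_of_degree_lt (lt_of_lt_of_le hf ?_)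
        exact_mod_cast Nat.cast_le.mpr h1
    obtain ⟨c', hc'⟩ := ih g hgd
    refine ⟨c' + Finsupp.single n b, ?_⟩
    rw [Sexp_add, ← hc', Sexp_single, hg]
    ring

end QIVP


theorem qivp_free_on_gbinom (f : Polynomial (RatFunc ℚ))
    (hf : ∀ n : ℤ, IsLaurentInt (f.eval (qInt n))) :
    ∃ c : ℕ →₀ RatFunc ℚ,
      (∀ k, IsLaurentInt (c k)) ∧
      f = c.sum (fun k a => Polynomial.C a * gbinomPoly k) ∧
      ∀ c' : ℕ →₀ RatFunc ℚ, (∀ k, IsLaurentInt (c' k)) →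
        f = c'.sum (fun k a => Polynomial.C a * gbinomPoly k) → c' = c := by
  classical
  obtain ⟨c, hc⟩ := QIVP.exists_expansion (f.natDegree + 1) f
    (lt_of_le_of_lt Polynomial.degree_le_natDegree (by exact_mod_cast Nat.lt_succ_self _))
  have hmem : ∀ k, c k ∈ QIVP.LInt := by
    intro k
    induction k using Nat.strong_induction_on with
    | _ k ih =>
      by_cases hk : k ∈ c.support
      · have he : f.eval (qInt k) = ∑ j ∈ c.support, c j * QIVP.gb k j := by
          rw [hc]; exact QIVP.eval_Sexp c k
        rw [← Finset.add_sum_erase _ _ hk, QIVP.gb_self, mul_one] at he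
        have heq : c k = f.eval (qInt k) - ∑ j ∈ c.support.erase k, c j * QIVP.gb k j := by
          linear_combination -he
        rw [heq]
        refine sub_mem (QIVP.mem_LInt.mpr (hf k)) (Subring.sum_mem _ fun j hj => ?_)
        rcases lt_or_gt_of_ne (Finset.ne_of_mem_erase hj) with h1 | h1
        · exact mul_mem (ih j h1) (QIVP.gb_mem k j)
        · rw [QIVP.gb_eq_zero (Int.natCast_nonneg k) (by exact_mod_cast h1), mul_zero]
          exact zero_mem _
      · rw [Finsupp.notMem_support_iff.mp hk]
        exact zero_mem _
  refine ⟨c, fun k => QIVP.mem_LInt.mp (hmem k), hc, ?_⟩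
  intro c' _ hc'
  have hz : QIVP.Sexp (c' - c) = 0 := by
    have h1 : QIVP.Sexp c' = f := hc'.symm
    rw [QIVP.Sexp_sub, h1, ← hc, sub_self]
  exact sub_eq_zero.mp (QIVP.Sexp_eq_zero hz)
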